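/- Let P ⊂ ℝ² be a lattice polygon with e_□(P) = l. Suppose Δ_P(x+y) ≥ l and Δ_P(x−y) ≥ l. Then the lattice width of P satisfies w(P) = min(Δ_P(x), Δ_P(y)). -/
import Mathlib


/-- The lattice polygon determined by a nonempty finite set `V` of lattice points:
the convex hull in `ℝ²` of the corresponding real points. -/
def latticePoly2 (V : Finset (Fin 2 → ℤ)) : Set (Fin 2 → ℝ) :=
  convexHull ℝ ((fun v : Fin 2 → ℤ => fun i => (v i : ℝ)) '' (V : Set (Fin 2 → ℤ)))

/-- `Δ_P(a₀·x + a₁·y) = w_a(P)`, the lattice width of `P ⊆ ℝ²` in the direction `a ∈ ℤ²`: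
the sup minus the inf of the linear form `p ↦ a·p` over `P`. -/
noncomputable def width2 (P : Set (Fin 2 → ℝ)) (a : Fin 2 → ℤ) : ℝ :=
  sSup ((fun p => ∑ i, (a i : ℝ) * p i) '' P) - sInf ((fun p => ∑ i, (a i : ℝ) * p i) '' P)

/-- `T(P) ⊆ [0,l]²` for some affine unimodular transformation `T : p ↦ A·p + v`. -/
def FitsInSquare (P : Set (Fin 2 → ℝ)) (l : ℤ) : Prop :=
  ∃ (A : Matrix (Fin 2) (Fin 2) ℤ) (v : Fin 2 → ℤ),
    (A.det = 1 ∨ A.det = -1) ∧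
    ∀ p ∈ P, ∀ i, ((A.map (fun z : ℤ => (z : ℝ))).mulVec p + fun j => (v j : ℝ)) i ∈
      Set.Icc (0 : ℝ) (l : ℝ)

/-- The set of lattice widths of `P` in all primitive directions `a ∈ ℤ²`. -/
def widthSet2 (P : Set (Fin 2 → ℝ)) : Set ℝ :=
  {w | ∃ a : Fin 2 → ℤ, Int.gcd (a 0) (a 1) = 1 ∧ width2 P a = w}

/-- `T(P) ⊆ [0,a] × [0,b]` for some affine unimodular transformation `T : p ↦ A·p + v`. -/
def FitsInRect (P : Set (Fin 2 → ℝ)) (a b : ℤ) : Prop :=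
  ∃ (A : Matrix (Fin 2) (Fin 2) ℤ) (v : Fin 2 → ℤ),
    (A.det = 1 ∨ A.det = -1) ∧
    ∀ p ∈ P, ((A.map (fun z : ℤ => (z : ℝ))).mulVec p + fun j => (v j : ℝ)) 0 ∈
        Set.Icc (0 : ℝ) (a : ℝ) ∧
      ((A.map (fun z : ℤ => (z : ℝ))).mulVec p + fun j => (v j : ℝ)) 1 ∈
        Set.Icc (0 : ℝ) (b : ℝ)

noncomputable def gfun (a v : Fin 2 → ℤ) : ℝ := ∑ i, (a i : ℝ) * (v i : ℝ)

lemma gfun_def (a v : Fin 2 → ℤ) :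
    gfun a v = (a 0 : ℝ) * (v 0 : ℝ) + (a 1 : ℝ) * (v 1 : ℝ) := by
  simp [gfun, Fin.sum_univ_two]

lemma lin2 (a : Fin 2 → ℤ) :
    IsLinearMap ℝ (fun p : Fin 2 → ℝ => ∑ i, (a i : ℝ) * p i) := by
  constructor
  · intro p q; simp [Fin.sum_univ_two]; ring
  · intro c p; simp [Fin.sum_univ_two, smul_eq_mul]; ring

lemma width2_eq (V : Finset (Fin 2 → ℤ)) (hV : V.Nonempty) (a : Fin 2 → ℤ) :
    width2 (latticePoly2 V) a = V.sup' hV (gfun a) - V.inf' hV (gfun a) := by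
  have hG : IsGreatest ((fun p => ∑ i, (a i : ℝ) * p i) '' latticePoly2 V)
      (V.sup' hV (gfun a)) := by
    constructor
    · obtain ⟨v, hv, hve⟩ := V.exists_mem_eq_sup' hV (gfun a)
      exact ⟨fun i => (v i : ℝ), subset_convexHull ℝ _ ⟨v, hv, rfl⟩, hve.symm⟩
    · rintro x ⟨p, hp, rfl⟩
      have h : latticePoly2 V ⊆ {p : Fin 2 → ℝ | ∑ i, (a i : ℝ) * p i ≤ V.sup' hV (gfun a)} := by
        apply convexHull_min ?_ (convex_halfSpace_le (lin2 a) _)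
        rintro _ ⟨v, hv, rfl⟩
        exact Finset.le_sup' (gfun a) hv
      exact h hp
  have hL : IsLeast ((fun p => ∑ i, (a i : ℝ) * p i) '' latticePoly2 V)
      (V.inf' hV (gfun a)) := by
    constructor
    · obtain ⟨v, hv, hve⟩ := V.exists_mem_eq_inf' hV (gfun a)
      exact ⟨fun i => (v i : ℝ), subset_convexHull ℝ _ ⟨v, hv, rfl⟩, hve.symm⟩
    · rintro x ⟨p, hp, rfl⟩
      have h : latticePoly2 V ⊆ {p : Fin 2 → ℝ | V.inf' hV (gfun a) ≤ ∑ i, (a i : ℝ) * p i} := by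
        apply convexHull_min ?_ (convex_halfSpace_ge (lin2 a) _)
        rintro _ ⟨v, hv, rfl⟩
        exact Finset.inf'_le (gfun a) hv
      exact h hp
  rw [width2, hG.csSup_eq, hL.csInf_eq]

lemma width2_ge (V : Finset (Fin 2 → ℤ)) (hV : V.Nonempty) (a : Fin 2 → ℤ)
    {v w : Fin 2 → ℤ} (hv : v ∈ V) (hw : w ∈ V) :
    gfun a v - gfun a w ≤ width2 (latticePoly2 V) a := by
  rw [width2_eq V hV a]
  exact sub_le_sub (Finset.le_sup' _ hv) (Finset.inf'_le _ hw)

/-- If `e_□(P) = l` and `Δ_P(x+y) ≥ l`, `Δ_P(x−y) ≥ l`, then the lattice width of `P`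
(the minimum of `w_a(P)` over all primitive `a ∈ ℤ²`) equals `min(Δ_P(x), Δ_P(y))`. -/
theorem latticeWidth_eq_of_diag_ge (V : Finset (Fin 2 → ℤ)) (hV : V.Nonempty)
    (P : Set (Fin 2 → ℝ)) (hP : P = latticePoly2 V) (l : ℤ)
    (he : max (width2 P ![1, 0]) (width2 P ![0, 1]) = (l : ℝ))
    (h1 : (l : ℝ) ≤ width2 P ![1, 1]) (h2 : (l : ℝ) ≤ width2 P ![1, -1]) :
    IsLeast (widthSet2 P) (min (width2 P ![1, 0]) (width2 P ![0, 1])) := by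
  subst hP
  set wx := width2 (latticePoly2 V) ![1, 0] with hwx
  set wy := width2 (latticePoly2 V) ![0, 1] with hwy
  have hxl : wx ≤ (l : ℝ) := he ▸ le_max_left _ _
  have hyl : wy ≤ (l : ℝ) := he ▸ le_max_right _ _
  -- coordinate bounds
  have gx : ∀ v : Fin 2 → ℤ, gfun ![1, 0] v = (v 0 : ℝ) := by
    intro v; simp [gfun_def]
  have gy : ∀ v : Fin 2 → ℤ, gfun ![0, 1] v = (v 1 : ℝ) := by
    intro v; simp [gfun_def]
  have bx : ∀ v ∈ V, ∀ w ∈ V, (v 0 : ℝ) - (w 0 : ℝ) ≤ wx := by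
    intro v hv w hw
    have := width2_ge V hV ![1, 0] hv hw
    rwa [gx, gx] at this
  have by' : ∀ v ∈ V, ∀ w ∈ V, (v 1 : ℝ) - (w 1 : ℝ) ≤ wy := by
    intro v hv w hw
    have := width2_ge V hV ![0, 1] hv hw
    rwa [gy, gy] at this
  constructor
  · -- membership
    rcases le_total wx wy with h | h
    · exact ⟨![1, 0], by simp, (min_eq_left h).symm⟩
    · exact ⟨![0, 1], by simp, (min_eq_right h).symm⟩
  · rintro w ⟨a, hgcd, rfl⟩
    rcases eq_or_ne (a 0) 0 with h0 | h0
    · -- a 1 = ±1, width in direction a is wy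
      have ha1 : (a 1).natAbs = 1 := by simpa [Int.gcd, h0] using hgcd
      obtain ⟨p, hp, hpe⟩ := V.exists_mem_eq_sup' hV (gfun ![0, 1])
      obtain ⟨q, hq, hqe⟩ := V.exists_mem_eq_inf' hV (gfun ![0, 1])
      have hwyv : wy = (p 1 : ℝ) - (q 1 : ℝ) := by
        rw [hwy, width2_eq V hV, hpe, hqe, gy, gy]
      rcases Int.natAbs_eq_iff.mp ha1 with h1' | h1'
      · have := width2_ge V hV a hp hq
        rw [gfun_def, gfun_def, h0, h1'] at this
        have : wy ≤ width2 (latticePoly2 V) a := by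
          rw [hwyv]; push_cast at this ⊢; linarith
        exact le_trans (min_le_right _ _) this
      · have := width2_ge V hV a hq hp
        rw [gfun_def, gfun_def, h0, h1'] at this
        have : wy ≤ width2 (latticePoly2 V) a := by
          rw [hwyv]; push_cast at this ⊢; linarith
        exact le_trans (min_le_right _ _) this
    rcases eq_or_ne (a 1) 0 with h1' | h1'
    · have ha0 : (a 0).natAbs = 1 := by simpa [Int.gcd, h1'] using hgcd
      obtain ⟨p, hp, hpe⟩ := V.exists_mem_eq_sup' hV (gfun ![1, 0])
      obtain ⟨q, hq, hqe⟩ := V.exists_mem_eq_inf' hV (gfun ![1, 0])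
      have hwxv : wx = (p 0 : ℝ) - (q 0 : ℝ) := by
        rw [hwx, width2_eq V hV, hpe, hqe, gx, gx]
      rcases Int.natAbs_eq_iff.mp ha0 with h0' | h0'
      · have := width2_ge V hV a hp hq
        rw [gfun_def, gfun_def, h0', h1'] at this
        have : wx ≤ width2 (latticePoly2 V) a := by
          rw [hwxv]; push_cast at this ⊢; linarith
        exact le_trans (min_le_left _ _) this
      · have := width2_ge V hV a hq hp
        rw [gfun_def, gfun_def, h0', h1'] at this
        have : wx ≤ width2 (latticePoly2 V) a := by
          rw [hwxv]; push_cast at this ⊢; linarith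
        exact le_trans (min_le_left _ _) this
    -- both coordinates nonzero
    have hminl : min wx wy ≤ (l : ℝ) := le_trans (min_le_left _ _) hxl
    rcases h0.lt_or_gt with hneg0 | hpos0 <;> rcases h1'.lt_or_gt with hneg1 | hpos1
    · -- a0 < 0, a1 < 0 : use (1,1) attainers, reversed
      obtain ⟨p, hp, hpe⟩ := V.exists_mem_eq_sup' hV (gfun ![1, 1])
      obtain ⟨q, hq, hqe⟩ := V.exists_mem_eq_inf' hV (gfun ![1, 1])
      have hsum : (l : ℝ) ≤ ((p 0 : ℝ) + p 1) - ((q 0 : ℝ) + q 1) := by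
        have := h1
        rw [width2_eq V hV, hpe, hqe, gfun_def, gfun_def] at this
        simp only [Matrix.cons_val_zero, Matrix.cons_val_one, Matrix.head_cons] at this
        push_cast at this ⊢; linarith
      have hd0 : (p 0 : ℝ) - q 0 ≤ wx := bx p hp q hq
      have hd1 : (p 1 : ℝ) - q 1 ≤ wy := by' p hp q hq
      have hkey := width2_ge V hV a hq hp
      rw [gfun_def, gfun_def] at hkey
      have ha0 : (a 0 : ℝ) ≤ -1 := by exact_mod_cast (show a 0 ≤ -1 by omega)
      have ha1 : (a 1 : ℝ) ≤ -1 := by exact_mod_cast (show a 1 ≤ -1 by omega)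
      have e0 : (p 0 : ℝ) - q 0 ≥ 0 := by linarith
      have e1 : (p 1 : ℝ) - q 1 ≥ 0 := by linarith
      nlinarith [mul_le_mul_of_nonneg_right ha0 e0, mul_le_mul_of_nonneg_right ha1 e1]
    · -- a0 < 0, a1 > 0 : use (1,-1) attainers, reversed
      obtain ⟨p, hp, hpe⟩ := V.exists_mem_eq_sup' hV (gfun ![1, -1])
      obtain ⟨q, hq, hqe⟩ := V.exists_mem_eq_inf' hV (gfun ![1, -1])
      have hsum : (l : ℝ) ≤ ((p 0 : ℝ) - p 1) - ((q 0 : ℝ) - q 1) := by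
        have := h2
        rw [width2_eq V hV, hpe, hqe, gfun_def, gfun_def] at this
        simp only [Matrix.cons_val_zero, Matrix.cons_val_one, Matrix.head_cons] at this
        push_cast at this ⊢; linarith
      have hd0 : (p 0 : ℝ) - q 0 ≤ wx := bx p hp q hq
      have hd1 : (q 1 : ℝ) - p 1 ≤ wy := by' q hq p hp
      have hkey := width2_ge V hV a hq hp
      rw [gfun_def, gfun_def] at hkey
      have ha0 : (a 0 : ℝ) ≤ -1 := by exact_mod_cast (show a 0 ≤ -1 by omega)
      have ha1 : (1 : ℝ) ≤ (a 1 : ℝ) := by exact_mod_cast hpos1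
      have e0 : (p 0 : ℝ) - q 0 ≥ 0 := by linarith
      have e1 : (q 1 : ℝ) - p 1 ≥ 0 := by linarith
      nlinarith [mul_le_mul_of_nonneg_right ha0 e0, mul_le_mul_of_nonneg_right ha1 e1]
    · -- a0 > 0, a1 < 0 : use (1,-1) attainers
      obtain ⟨p, hp, hpe⟩ := V.exists_mem_eq_sup' hV (gfun ![1, -1])
      obtain ⟨q, hq, hqe⟩ := V.exists_mem_eq_inf' hV (gfun ![1, -1])
      have hsum : (l : ℝ) ≤ ((p 0 : ℝ) - p 1) - ((q 0 : ℝ) - q 1) := by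
        have := h2
        rw [width2_eq V hV, hpe, hqe, gfun_def, gfun_def] at this
        simp only [Matrix.cons_val_zero, Matrix.cons_val_one, Matrix.head_cons] at this
        push_cast at this ⊢; linarith
      have hd0 : (p 0 : ℝ) - q 0 ≤ wx := bx p hp q hq
      have hd1 : (q 1 : ℝ) - p 1 ≤ wy := by' q hq p hp
      have hkey := width2_ge V hV a hp hq
      rw [gfun_def, gfun_def] at hkey
      have ha0 : (1 : ℝ) ≤ (a 0 : ℝ) := by exact_mod_cast hpos0
      have ha1 : (a 1 : ℝ) ≤ -1 := by exact_mod_cast (show a 1 ≤ -1 by omega)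
      have e0 : (p 0 : ℝ) - q 0 ≥ 0 := by linarith
      have e1 : (q 1 : ℝ) - p 1 ≥ 0 := by linarith
      nlinarith [mul_le_mul_of_nonneg_right ha0 e0, mul_le_mul_of_nonneg_right ha1 e1]
    · -- a0 > 0, a1 > 0 : use (1,1) attainers
      obtain ⟨p, hp, hpe⟩ := V.exists_mem_eq_sup' hV (gfun ![1, 1])
      obtain ⟨q, hq, hqe⟩ := V.exists_mem_eq_inf' hV (gfun ![1, 1])
      have hsum : (l : ℝ) ≤ ((p 0 : ℝ) + p 1) - ((q 0 : ℝ) + q 1) := by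
        have := h1
        rw [width2_eq V hV, hpe, hqe, gfun_def, gfun_def] at this
        simp only [Matrix.cons_val_zero, Matrix.cons_val_one, Matrix.head_cons] at this
        push_cast at this ⊢; linarith
      have hd0 : (p 0 : ℝ) - q 0 ≤ wx := bx p hp q hq
      have hd1 : (p 1 : ℝ) - q 1 ≤ wy := by' p hp q hq
      have hkey := width2_ge V hV a hp hq
      rw [gfun_def, gfun_def] at hkey
      have ha0 : (1 : ℝ) ≤ (a 0 : ℝ) := by exact_mod_cast hpos0
      have ha1 : (1 : ℝ) ≤ (a 1 : ℝ) := by exact_mod_cast hpos1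
      have e0 : (p 0 : ℝ) - q 0 ≥ 0 := by linarith
      have e1 : (p 1 : ℝ) - q 1 ≥ 0 := by linarith
      nlinarith [mul_le_mul_of_nonneg_right ha0 e0, mul_le_mul_of_nonneg_right ha1 e1]
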